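/- Total variation closeness of shifted binomials: if (d_n) is a sequence of natural numbers with d_n = o(√n), and c_n ≤ d_n, and n_n satisfies n − d_n ≤ n_n ≤ n, then d_TV( c_n + Bin(n_n, 1/2), Bin(n, 1/2) ) → 0 as n → ∞. -/

import Mathlib

open Filter

/-- The probability mass function of `Bin(m, 1/2)` on `ℤ`. -/
noncomputable def binProb (m : ℕ) (k : ℤ) : ℝ :=
  if 0 ≤ k ∧ k ≤ (m : ℤ) then (Nat.choose m k.toNat : ℝ) / 2 ^ m else 0

/-- The measure of a set `A ⊆ ℤ` under the mass function `f`. -/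
noncomputable def massOf (f : ℤ → ℝ) (A : Set ℤ) : ℝ := ∑' k : A, f ↑k

/-- Total variation distance between two mass functions on `ℤ`:
`sup_{A ⊆ ℤ} |μ(A) − ν(A)|`. -/
noncomputable def dTV (f g : ℤ → ℝ) : ℝ := ⨆ A : Set ℤ, |massOf f A - massOf g A|

noncomputable def binM (m : ℕ) : ℝ := (m.choose (m / 2) : ℝ) / 2 ^ m

lemma binM_nonneg (m : ℕ) : 0 ≤ binM m := by unfold binM; positivity

lemma binProb_nonneg (m : ℕ) (k : ℤ) : 0 ≤ binProb m k := by
  unfold binProb; split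
  · positivity
  · exact le_refl 0

lemma binProb_eq (m : ℕ) {k : ℤ} (hk : 0 ≤ k) :
    binProb m k = (Nat.choose m k.toNat : ℝ) / 2 ^ m := by
  unfold binProb
  split
  · rfl
  · rename_i h
    have : (m : ℤ) < k := by omega
    rw [Nat.choose_eq_zero_of_lt (by omega)]
    simp

lemma binProb_eq_zero_of_neg (m : ℕ) {k : ℤ} (h : k < 0) : binProb m k = 0 := by
  unfold binProb; rw [if_neg (by omega)]

lemma binProb_eq_zero_of_gt (m : ℕ) {k : ℤ} (h : (m : ℤ) < k) : binProb m k = 0 := by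
  unfold binProb; rw [if_neg (by omega)]

lemma binProb_succ (m : ℕ) (k : ℤ) :
    binProb (m + 1) k = (binProb m k + binProb m (k - 1)) / 2 := by
  rcases lt_trichotomy k 0 with h | h | h
  · rw [binProb_eq_zero_of_neg _ h, binProb_eq_zero_of_neg _ h,
      binProb_eq_zero_of_neg _ (by omega)]
    norm_num
  · subst h
    rw [binProb_eq _ le_rfl, binProb_eq _ le_rfl, binProb_eq_zero_of_neg _ (by omega)]
    simp [pow_succ]
    ring
  · have hk0 : (0 : ℤ) ≤ k := le_of_lt h
    have hk1 : (0 : ℤ) ≤ k - 1 := by omega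
    rw [binProb_eq _ hk0, binProb_eq _ hk0, binProb_eq _ hk1]
    have ht : k.toNat = (k - 1).toNat + 1 := by omega
    rw [ht, Nat.choose_succ_succ]
    push_cast
    rw [pow_succ]
    ring

lemma choose_mono_left {m i : ℕ} (h : i < m / 2) : m.choose i ≤ m.choose (i + 1) := by
  have h1 := Nat.choose_succ_right_eq m i
  have h2 : i + 1 ≤ m - i := by omega
  have : m.choose i * (i + 1) ≤ m.choose (i + 1) * (i + 1) := by
    calc m.choose i * (i + 1) ≤ m.choose i * (m - i) := Nat.mul_le_mul_left _ h2
      _ = m.choose (i + 1) * (i + 1) := h1.symm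
  exact Nat.le_of_mul_le_mul_right this (Nat.succ_pos i)

lemma choose_anti_left {m i : ℕ} (h : m / 2 ≤ i) : m.choose (i + 1) ≤ m.choose i := by
  have h1 := Nat.choose_succ_right_eq m i
  have h2 : m - i ≤ i + 1 := by omega
  have : m.choose (i + 1) * (i + 1) ≤ m.choose i * (i + 1) := by
    calc m.choose (i + 1) * (i + 1) = m.choose i * (m - i) := h1
      _ ≤ m.choose i * (i + 1) := Nat.mul_le_mul_left _ h2
  exact Nat.le_of_mul_le_mul_right this (Nat.succ_pos i)

/-- Key telescoping sum: total variation of one-step shift. -/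
lemma sum_abs_step (m : ℕ) :
    ∑' k : ℤ, |binProb m (k - 1) - binProb m k| = 2 * binM m := by
  set q : ℕ → ℝ := fun j => if j = 0 then 0 else (m.choose (j - 1) : ℝ) / 2 ^ m with hq
  have hq0 : q 0 = 0 := rfl
  have hqs : ∀ j : ℕ, q (j + 1) = (m.choose j : ℝ) / 2 ^ m := fun j => by simp [hq]
  have hbp : ∀ j : ℕ, binProb m (j : ℤ) = q (j + 1) := by
    intro j
    rw [binProb_eq _ (Int.natCast_nonneg j), hqs]
    simp
  have hbp' : ∀ j : ℕ, binProb m ((j : ℤ) - 1) = q j := by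
    intro j
    cases j with
    | zero => rw [hq0]; exact binProb_eq_zero_of_neg _ (by norm_num)
    | succ i =>
        have he : ((i + 1 : ℕ) : ℤ) - 1 = (i : ℤ) := by push_cast; ring
        rw [he, hbp i]
  have hsum : ∑' k : ℤ, |binProb m (k - 1) - binProb m k|
      = ∑ j ∈ Finset.range (m + 2), |q j - q (j + 1)| := by
    rw [tsum_eq_sum (s := (Finset.range (m + 2)).map
        ⟨fun n : ℕ => (n : ℤ), Nat.cast_injective⟩) ?_]
    · rw [Finset.sum_map]
      exact Finset.sum_congr rfl fun j _ => by
        simp only [Function.Embedding.coeFn_mk]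
        rw [hbp, hbp']
    · intro k hk
      have hk' : k < 0 ∨ (m + 1 : ℤ) < k := by
        by_contra hcon
        push_neg at hcon
        exact hk (Finset.mem_map.2 ⟨k.toNat, Finset.mem_range.2 (by omega), by simp; omega⟩)
      rcases hk' with h | h
      · rw [binProb_eq_zero_of_neg _ (by omega), binProb_eq_zero_of_neg _ (by omega)]; simp
      · rw [binProb_eq_zero_of_gt _ (by omega), binProb_eq_zero_of_gt _ (by omega)]; simp
  rw [hsum]
  set p := m / 2 + 1 with hp
  have mono1 : ∀ j < p, q j ≤ q (j + 1) := by
    intro j hj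
    cases j with
    | zero => rw [hq0, hqs]; positivity
    | succ i =>
        rw [hqs, hqs]
        have : i < m / 2 := by omega
        gcongr
        exact choose_mono_left this
  have mono2 : ∀ j, p ≤ j → q (j + 1) ≤ q j := by
    intro j hj
    cases j with
    | zero => omega
    | succ i =>
        rw [hqs, hqs]
        have : m / 2 ≤ i := by omega
        gcongr
        exact choose_anti_left this
  have hzero : q (m + 2) = 0 := by
    rw [show m + 2 = (m + 1) + 1 from rfl, hqs, Nat.choose_eq_zero_of_lt (by omega)]
    simp
  have hp2 : p ≤ m + 2 := by omega
  have hqp : q p = binM m := by rw [hp, hqs]; rfl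
  calc ∑ j ∈ Finset.range (m + 2), |q j - q (j + 1)|
      = ∑ j ∈ Finset.Ico 0 p, |q j - q (j + 1)|
        + ∑ j ∈ Finset.Ico p (m + 2), |q j - q (j + 1)| := by
        rw [Finset.sum_Ico_consecutive _ (Nat.zero_le p) hp2, Finset.range_eq_Ico]
    _ = ∑ j ∈ Finset.range p, (q (j + 1) - q j)
        + ∑ j ∈ Finset.Ico p (m + 2), (q j - q (j + 1)) := by
        congr 1
        · rw [← Finset.range_eq_Ico]
          refine Finset.sum_congr rfl fun j hj => ?_
          rw [abs_sub_comm, abs_of_nonneg (sub_nonneg.2 (mono1 j (Finset.mem_range.1 hj)))]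
        · refine Finset.sum_congr rfl fun j hj => ?_
          rw [abs_of_nonneg (sub_nonneg.2 (mono2 j (Finset.mem_Ico.1 hj).1))]
    _ = (q p - q 0) + (q p - q (m + 2)) := by
        rw [Finset.sum_range_sub q, Finset.sum_Ico_eq_sum_range]
        congr 1
        have h := Finset.sum_range_sub' (fun i => q (p + i)) (m + 2 - p)
        have e : p + (m + 2 - p) = m + 2 := by omega
        calc ∑ i ∈ Finset.range (m + 2 - p), (q (p + i) - q (p + i + 1))
            = ∑ i ∈ Finset.range (m + 2 - p), (q (p + i) - q (p + (i + 1))) :=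
              Finset.sum_congr rfl fun i _ => by rw [show p + (i + 1) = p + i + 1 by omega]
          _ = q (p + 0) - q (p + (m + 2 - p)) := h
          _ = q p - q (m + 2) := by rw [e, Nat.add_zero]
    _ = 2 * binM m := by rw [hq0, hzero, hqp]; ring
lemma summable_binProb_shift (a : ℕ) (x : ℤ) :
    Summable (fun k : ℤ => binProb a (k - x)) := by
  apply summable_of_ne_finset_zero (s := Finset.Icc x ((a : ℤ) + x))
  intro k hk
  rw [Finset.mem_Icc] at hk
  push_neg at hk
  rcases lt_or_ge k x with h | h
  · exact binProb_eq_zero_of_neg _ (by omega)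
  · exact binProb_eq_zero_of_gt _ (by have := hk h; omega)

lemma summable_binProb (a : ℕ) : Summable (binProb a) := by
  simpa using summable_binProb_shift a 0

lemma summable_absdiff (a b : ℕ) (x y : ℤ) :
    Summable (fun k : ℤ => |binProb a (k - x) - binProb b (k - y)|) :=
  ((summable_binProb_shift a x).sub (summable_binProb_shift b y)).abs

lemma tsum_tri (f g h : ℤ → ℝ) (hfg : Summable fun k => |f k - g k|)
    (hgh : Summable fun k => |g k - h k|) (hfh : Summable fun k => |f k - h k|) :
    ∑' k, |f k - h k| ≤ ∑' k, |f k - g k| + ∑' k, |g k - h k| := by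
  rw [← Summable.tsum_add hfg hgh]
  exact Summable.tsum_le_tsum (fun k => abs_sub_le _ _ _) hfh (hfg.add hgh)

lemma step_bound (m : ℕ) : ∑' k : ℤ, |binProb (m + 1) k - binProb m k| = binM m := by
  have hpt : ∀ k : ℤ, |binProb (m + 1) k - binProb m k|
      = |binProb m (k - 1) - binProb m k| / 2 := by
    intro k
    rw [binProb_succ]
    rw [show (binProb m k + binProb m (k - 1)) / 2 - binProb m k
        = (binProb m (k - 1) - binProb m k) / 2 from by ring]
    rw [abs_div, abs_two]
  calc ∑' k : ℤ, |binProb (m + 1) k - binProb m k|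
      = ∑' k : ℤ, |binProb m (k - 1) - binProb m k| / 2 := tsum_congr hpt
    _ = (∑' k : ℤ, |binProb m (k - 1) - binProb m k|) / 2 := tsum_div_const
    _ = (2 * binM m) / 2 := by rw [sum_abs_step]
    _ = binM m := by ring

lemma binM_succ_le (m : ℕ) : binM (m + 1) ≤ binM m := by
  have key : (((m + 1).choose ((m + 1) / 2)) : ℝ) ≤ 2 * (m.choose (m / 2)) := by
    cases h : (m + 1) / 2 with
    | zero =>
        rw [Nat.choose_zero_right]
        have h1 : 1 ≤ m.choose (m / 2) := Nat.choose_pos (Nat.div_le_self m 2)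
        push_cast
        have : (1 : ℝ) ≤ (m.choose (m / 2) : ℝ) := by exact_mod_cast h1
        linarith
    | succ s =>
        rw [Nat.choose_succ_succ]
        have h1 : m.choose s ≤ m.choose (m / 2) := Nat.choose_le_middle s m
        have h2 : m.choose (s + 1) ≤ m.choose (m / 2) := Nat.choose_le_middle (s + 1) m
        push_cast
        have h1 : (m.choose s : ℝ) ≤ m.choose (m / 2) := by exact_mod_cast h1
        have h2 : (m.choose (s + 1) : ℝ) ≤ m.choose (m / 2) := by exact_mod_cast h2
        linarith
  unfold binM
  have h2 : (0 : ℝ) < 2 ^ m := by positivity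
  rw [pow_succ, div_le_div_iff₀ (by positivity) h2]
  calc ((m + 1).choose ((m + 1) / 2) : ℝ) * 2 ^ m
      ≤ (2 * (m.choose (m / 2))) * 2 ^ m := mul_le_mul_of_nonneg_right key h2.le
    _ = (m.choose (m / 2)) * (2 ^ m * 2) := by ring

lemma binM_anti {a b : ℕ} (h : a ≤ b) : binM b ≤ binM a :=
  antitone_nat_of_succ_le binM_succ_le h

lemma grow_bound (m j : ℕ) :
    ∑' k : ℤ, |binProb (m + j) k - binProb m k| ≤ j * binM m := by
  induction j with
  | zero => simp
  | succ j ih =>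
      have tri := tsum_tri (binProb (m + (j + 1))) (binProb (m + j)) (binProb m)
        (by simpa using summable_absdiff (m + (j + 1)) (m + j) 0 0)
        (by simpa using summable_absdiff (m + j) m 0 0)
        (by simpa using summable_absdiff (m + (j + 1)) m 0 0)
      have hstep : ∑' k : ℤ, |binProb (m + (j + 1)) k - binProb (m + j) k| = binM (m + j) := by
        rw [show m + (j + 1) = (m + j) + 1 from rfl]
        exact step_bound (m + j)
      have hMle : binM (m + j) ≤ binM m := binM_anti (Nat.le_add_right m j)
      push_cast
      calc ∑' k : ℤ, |binProb (m + (j + 1)) k - binProb m k|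
          ≤ ∑' k : ℤ, |binProb (m + (j + 1)) k - binProb (m + j) k|
            + ∑' k : ℤ, |binProb (m + j) k - binProb m k| := tri
        _ ≤ binM m + j * binM m := by rw [hstep]; exact add_le_add hMle ih
        _ = ((j : ℝ) + 1) * binM m := by ring

lemma shift_bound (a c : ℕ) :
    ∑' k : ℤ, |binProb a (k - (c : ℤ)) - binProb a k| ≤ c * (2 * binM a) := by
  induction c with
  | zero => simp
  | succ c ih =>
      have h1 : ∑' k : ℤ, |binProb a (k - ((c : ℤ) + 1)) - binProb a (k - (c : ℤ))|
          = 2 * binM a := by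
        calc ∑' k : ℤ, |binProb a (k - ((c : ℤ) + 1)) - binProb a (k - (c : ℤ))|
            = ∑' k : ℤ, (fun x : ℤ => |binProb a (x - 1) - binProb a x|) (k - (c : ℤ)) :=
              tsum_congr fun k => by
                rw [show k - ((c : ℤ) + 1) = (k - (c : ℤ)) - 1 from by ring]
          _ = ∑' k : ℤ, |binProb a (k - 1) - binProb a k| := by
              simpa using (Equiv.subRight (c : ℤ)).tsum_eq
                (fun x : ℤ => |binProb a (x - 1) - binProb a x|)
          _ = 2 * binM a := sum_abs_step a
      have tri := tsum_tri (fun k => binProb a (k - ((c : ℤ) + 1)))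
        (fun k => binProb a (k - (c : ℤ))) (binProb a)
        (summable_absdiff a a ((c : ℤ) + 1) (c : ℤ))
        (by simpa using summable_absdiff a a (c : ℤ) 0)
        (by simpa using summable_absdiff a a ((c : ℤ) + 1) 0)
      push_cast
      calc ∑' k : ℤ, |binProb a (k - ((c : ℤ) + 1)) - binProb a k|
          ≤ ∑' k : ℤ, |binProb a (k - ((c : ℤ) + 1)) - binProb a (k - (c : ℤ))|
            + ∑' k : ℤ, |binProb a (k - (c : ℤ)) - binProb a k| := tri
        _ ≤ 2 * binM a + c * (2 * binM a) := by rw [h1]; exact add_le_add le_rfl ih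
        _ = ((c : ℝ) + 1) * (2 * binM a) := by ring
lemma centralBinom_div_bound (k : ℕ) :
    (Nat.centralBinom k : ℝ) / 4 ^ k ≤ 1 / Real.sqrt (k + 1) := by
  induction k with
  | zero => simp [Nat.centralBinom]
  | succ k ih =>
      have hrecN := Nat.succ_mul_centralBinom_succ k
      have hrec : ((k : ℝ) + 1) * (Nat.centralBinom (k + 1) : ℝ)
          = 2 * (2 * (k : ℝ) + 1) * (Nat.centralBinom k : ℝ) := by
        exact_mod_cast congrArg (Nat.cast : ℕ → ℝ) hrecN
      set a := Real.sqrt ((k : ℝ) + 1) with hadef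
      set b := Real.sqrt ((k : ℝ) + 2) with hbdef
      have ha0 : 0 < a := Real.sqrt_pos.2 (by positivity)
      have hb0 : 0 < b := Real.sqrt_pos.2 (by positivity)
      have ha2 : a ^ 2 = (k : ℝ) + 1 := Real.sq_sqrt (by positivity)
      have hb2 : b ^ 2 = (k : ℝ) + 2 := Real.sq_sqrt (by positivity)
      have hab : b * (2 * (k : ℝ) + 1) ≤ a * (2 * (k : ℝ) + 2) := by
        have hsq : (b * (2 * (k : ℝ) + 1)) ^ 2 ≤ (a * (2 * (k : ℝ) + 2)) ^ 2 := by
          rw [mul_pow, mul_pow, ha2, hb2]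
          have hk : (0 : ℝ) ≤ (k : ℝ) := Nat.cast_nonneg k
          nlinarith [hk]
        have := Real.sqrt_le_sqrt hsq
        rwa [Real.sqrt_sq (by positivity), Real.sqrt_sq (by positivity)] at this
      have h4 : (0 : ℝ) < 4 ^ k := by positivity
      have hCB : (0 : ℝ) ≤ (Nat.centralBinom k : ℝ) := Nat.cast_nonneg _
      have hCBa : (Nat.centralBinom k : ℝ) * a ≤ 4 ^ k := by
        have := (div_le_div_iff₀ h4 ha0).1 ih
        linarith [this]
      -- goal : CB (k+1) / 4^(k+1) ≤ 1 / √(k+2)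
      have hgoalcast : ((k : ℝ) + 1 + 1) = (k : ℝ) + 2 := by ring
      rw [show (((k : ℕ) + 1 : ℕ) : ℝ) + 1 = (k : ℝ) + 2 from by push_cast; ring]
      rw [div_le_div_iff₀ (by positivity) hb0, one_mul]
      -- CB(k+1) * b ≤ 4^(k+1)
      have hk1 : (0 : ℝ) < (k : ℝ) + 1 := by positivity
      have hCB1 : (Nat.centralBinom (k + 1) : ℝ)
          = 2 * (2 * (k : ℝ) + 1) * (Nat.centralBinom k : ℝ) / ((k : ℝ) + 1) := by
        field_simp
        linarith [hrec]
      rw [hCB1]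
      rw [div_mul_eq_mul_div, div_le_iff₀ hk1]
      calc 2 * (2 * (k : ℝ) + 1) * (Nat.centralBinom k : ℝ) * b
          = 2 * (Nat.centralBinom k : ℝ) * (b * (2 * (k : ℝ) + 1)) := by ring
        _ ≤ 2 * (Nat.centralBinom k : ℝ) * (a * (2 * (k : ℝ) + 2)) := by
            apply mul_le_mul_of_nonneg_left hab (by positivity)
        _ = (2 * (2 * (k : ℝ) + 2)) * ((Nat.centralBinom k : ℝ) * a) := by ring
        _ ≤ (2 * (2 * (k : ℝ) + 2)) * 4 ^ k := by
            apply mul_le_mul_of_nonneg_left hCBa (by positivity)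
        _ = 4 ^ (k + 1) * ((k : ℝ) + 1) := by rw [pow_succ]; ring

lemma binM_two_mul (k : ℕ) : binM (2 * k) = (Nat.centralBinom k : ℝ) / 4 ^ k := by
  unfold binM Nat.centralBinom
  have h2 : 2 * k / 2 = k := by omega
  rw [h2, show ((2 : ℝ)) ^ (2 * k) = 4 ^ k from by rw [pow_mul]; norm_num]

lemma binM_le_sqrt (m : ℕ) : binM m ≤ Real.sqrt 2 / Real.sqrt ((m : ℝ) + 1) := by
  set k := m / 2 with hk
  have hkm : 2 * k ≤ m := by omega
  have h1 : binM m ≤ 1 / Real.sqrt ((k : ℝ) + 1) := by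
    refine (binM_anti hkm).trans ?_
    rw [binM_two_mul]
    exact centralBinom_div_bound k
  have h2 : Real.sqrt ((m : ℝ) + 1) ≤ Real.sqrt 2 * Real.sqrt ((k : ℝ) + 1) := by
    rw [← Real.sqrt_mul (by norm_num : (0 : ℝ) ≤ 2)]
    apply Real.sqrt_le_sqrt
    have hle : m + 1 ≤ 2 * (k + 1) := by omega
    have := (Nat.cast_le (α := ℝ)).2 hle
    push_cast at this
    linarith
  refine h1.trans ?_
  rw [div_le_div_iff₀ (by positivity) (by positivity)]
  simpa using h2

lemma massOf_diff_le (f g : ℤ → ℝ) (hf : Summable f) (hg : Summable g) (A : Set ℤ) :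
    |massOf f A - massOf g A| ≤ ∑' k, |f k - g k| := by
  have habs : Summable (fun k => |f k - g k|) := (hf.sub hg).abs
  have h1 : massOf f A - massOf g A = ∑' k : A, (f ↑k - g ↑k) := by
    rw [massOf, massOf]
    exact (Summable.tsum_sub (hf.subtype _) (hg.subtype _)).symm
  rw [h1]
  calc |∑' k : A, (f ↑k - g ↑k)| ≤ ∑' k : A, |f ↑k - g ↑k| := by
        have := norm_tsum_le_tsum_norm (f := fun k : A => f ↑k - g ↑k)
          (by exact habs.subtype A)
        simpa [Real.norm_eq_abs] using this
    _ ≤ ∑' k, |f k - g k| := by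
        have e := _root_.tsum_subtype A (fun k => |f k - g k|)
        exact e.trans_le (Summable.tsum_le_tsum
          (fun k => Set.indicator_le_self' (fun x _ => abs_nonneg _) k)
          (habs.indicator A) habs)

lemma dTV_le_tsum (f g : ℤ → ℝ) (hf : Summable f) (hg : Summable g) :
    dTV f g ≤ ∑' k, |f k - g k| :=
  ciSup_le fun A => massOf_diff_le f g hf hg A

lemma massOf_empty (f : ℤ → ℝ) : massOf f ∅ = 0 := by
  simp [massOf, tsum_empty]

lemma dTV_nonneg (f g : ℤ → ℝ) (hf : Summable f) (hg : Summable g) : 0 ≤ dTV f g := by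
  have hb : BddAbove (Set.range fun A : Set ℤ => |massOf f A - massOf g A|) :=
    ⟨∑' k, |f k - g k|, by rintro _ ⟨A, rfl⟩; exact massOf_diff_le f g hf hg A⟩
  have h := le_ciSup hb (∅ : Set ℤ)
  simp only [massOf_empty] at h
  simp at h; exact h

/-- Total variation closeness of shifted binomials: if `d n = o(√n)`, `c n ≤ d n` and
`n − d n ≤ m n ≤ n`, then `d_TV(c n + Bin(m n, 1/2), Bin(n, 1/2)) → 0`. -/
theorem tv_shifted_binomials (d c m : ℕ → ℕ)
    (hd : Tendsto (fun n => (d n : ℝ) / Real.sqrt n) atTop (nhds 0))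
    (hc : ∀ n, c n ≤ d n)
    (hm1 : ∀ n, n - d n ≤ m n) (hm2 : ∀ n, m n ≤ n) :
    Tendsto (fun n => dTV (fun k => binProb (m n) (k - (c n : ℤ))) (binProb n))
      atTop (nhds 0) := by
  have key : ∀ n, dTV (fun k => binProb (m n) (k - (c n : ℤ))) (binProb n)
      ≤ (c n : ℝ) * (2 * binM (m n)) + ((n - m n : ℕ) : ℝ) * binM (m n) := by
    intro n
    have hf : Summable (fun k : ℤ => binProb (m n) (k - (c n : ℤ))) :=
      summable_binProb_shift _ _
    have hg : Summable (binProb n) := summable_binProb _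
    have h1 := dTV_le_tsum _ _ hf hg
    have h2 := tsum_tri (fun k => binProb (m n) (k - (c n : ℤ))) (binProb (m n)) (binProb n)
      (by simpa using summable_absdiff (m n) (m n) (c n : ℤ) 0)
      (by simpa using summable_absdiff (m n) n 0 0)
      (by simpa using summable_absdiff (m n) n (c n : ℤ) 0)
    have h3 := shift_bound (m n) (c n)
    have h4 : ∑' k : ℤ, |binProb (m n) k - binProb n k| ≤ ((n - m n : ℕ) : ℝ) * binM (m n) := by
      have hgb := grow_bound (m n) (n - m n)
      rw [show m n + (n - m n) = n from by have := hm2 n; omega] at hgb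
      have : ∀ k : ℤ, |binProb (m n) k - binProb n k| = |binProb n k - binProb (m n) k| :=
        fun k => abs_sub_comm _ _
      rw [tsum_congr this]
      exact hgb
    calc dTV (fun k => binProb (m n) (k - (c n : ℤ))) (binProb n)
        ≤ ∑' k : ℤ, |binProb (m n) (k - (c n : ℤ)) - binProb n k| := h1
      _ ≤ ∑' k : ℤ, |binProb (m n) (k - (c n : ℤ)) - binProb (m n) k|
          + ∑' k : ℤ, |binProb (m n) k - binProb n k| := h2
      _ ≤ (c n : ℝ) * (2 * binM (m n)) + ((n - m n : ℕ) : ℝ) * binM (m n) :=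
          add_le_add h3 h4
  have hev : ∀ᶠ n in atTop,
      dTV (fun k => binProb (m n) (k - (c n : ℤ))) (binProb n) ≤ 6 * ((d n : ℝ) / Real.sqrt n) := by
    have h5 : ∀ᶠ n in atTop, (d n : ℝ) / Real.sqrt n < 1 / 2 :=
      hd.eventually_lt_const (by norm_num)
    filter_upwards [h5, eventually_ge_atTop 1] with n h5n hn1
    have hn0 : (0 : ℝ) < n := by exact_mod_cast Nat.lt_of_lt_of_le Nat.zero_lt_one hn1
    have hs : (0 : ℝ) < Real.sqrt n := Real.sqrt_pos.2 hn0
    have hdn : (d n : ℝ) ≤ Real.sqrt n / 2 := by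
      have := (div_lt_iff₀ hs).1 h5n
      linarith
    have hn1' : (1 : ℝ) ≤ n := by exact_mod_cast hn1
    have hsn : Real.sqrt (n : ℝ) ≤ n := by
      calc Real.sqrt (n : ℝ) ≤ Real.sqrt ((n : ℝ) ^ 2) := Real.sqrt_le_sqrt (by nlinarith)
        _ = n := Real.sqrt_sq (by linarith)
    have hdn2 : (d n : ℝ) ≤ (n : ℝ) / 2 := by linarith
    have hdnn : d n ≤ n := by
      have hr : (d n : ℝ) ≤ (n : ℝ) := hdn2.trans (by linarith)
      exact_mod_cast hr
    have hmn : (n : ℝ) / 2 ≤ (m n : ℝ) := by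
      have hcast : ((n - d n : ℕ) : ℝ) = (n : ℝ) - (d n : ℝ) := by
        rw [Nat.cast_sub hdnn]
      have := (Nat.cast_le (α := ℝ)).2 (hm1 n)
      rw [hcast] at this
      linarith
    have hMb : binM (m n) ≤ 2 / Real.sqrt n := by
      refine (binM_le_sqrt (m n)).trans ?_
      have h6 : Real.sqrt ((n : ℝ) / 2) ≤ Real.sqrt ((m n : ℝ) + 1) :=
        Real.sqrt_le_sqrt (by linarith)
      have hsqrt4 : Real.sqrt 4 = 2 := by
        rw [show (4 : ℝ) = 2 ^ 2 by norm_num, Real.sqrt_sq (by norm_num)]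
      have e1 : Real.sqrt 2 * Real.sqrt n = 2 * Real.sqrt ((n : ℝ) / 2) := by
        have ea : Real.sqrt 2 * Real.sqrt (n : ℝ) = Real.sqrt (2 * (n : ℝ)) :=
          (Real.sqrt_mul (by norm_num) _).symm
        have eb : (2 : ℝ) * Real.sqrt ((n : ℝ) / 2) = Real.sqrt (2 ^ 2 * ((n : ℝ) / 2)) := by
          rw [Real.sqrt_mul (by positivity), Real.sqrt_sq (by norm_num)]
        rw [ea, eb]
        congr 1
        ring
      rw [div_le_div_iff₀ (by positivity) hs]
      calc Real.sqrt 2 * Real.sqrt n = 2 * Real.sqrt ((n : ℝ) / 2) := e1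
        _ ≤ 2 * Real.sqrt ((m n : ℝ) + 1) :=
            mul_le_mul_of_nonneg_left h6 (by norm_num)
    have hcn : ((c n : ℕ) : ℝ) ≤ (d n : ℝ) := by exact_mod_cast hc n
    have hnm : ((n - m n : ℕ) : ℝ) ≤ (d n : ℝ) := by
      exact_mod_cast (show n - m n ≤ d n from by have := hm1 n; omega)
    have hM0 := binM_nonneg (m n)
    have t1 : (c n : ℝ) * (2 * binM (m n)) ≤ (d n : ℝ) * (2 * (2 / Real.sqrt n)) := by
      apply mul_le_mul hcn (by linarith) (by linarith) (Nat.cast_nonneg _)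
    have t2 : ((n - m n : ℕ) : ℝ) * binM (m n) ≤ (d n : ℝ) * (2 / Real.sqrt n) :=
      mul_le_mul hnm hMb hM0 (Nat.cast_nonneg _)
    calc dTV (fun k => binProb (m n) (k - (c n : ℤ))) (binProb n)
        ≤ (c n : ℝ) * (2 * binM (m n)) + ((n - m n : ℕ) : ℝ) * binM (m n) := key n
      _ ≤ (d n : ℝ) * (2 * (2 / Real.sqrt n)) + (d n : ℝ) * (2 / Real.sqrt n) :=
          add_le_add t1 t2
      _ = 6 * ((d n : ℝ) / Real.sqrt n) := by ring
  have hnn : ∀ n, 0 ≤ dTV (fun k => binProb (m n) (k - (c n : ℤ))) (binProb n) :=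
    fun n => dTV_nonneg _ _ (summable_binProb_shift _ _) (summable_binProb _)
  have hlim : Tendsto (fun n => 6 * ((d n : ℝ) / Real.sqrt n)) atTop (nhds 0) := by
    simpa using hd.const_mul 6
  exact squeeze_zero' (Eventually.of_forall hnn) hev hlim
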